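/- Stability of exponentially tilted distributions (Lemma in Appendix B, exp_stability): Let Z ⊆ ℝ^d be compact with Lebesgue measure vol(Z) > 0, and let f, g : Z → ℝ be Lebesgue-measurable with sup_{z∈Z}|f(z)| ≤ B_f and sup_{z∈Z}|g(z)| ≤ B_g. Let P_1 and P_2 be the probability measures on Z with densities proportional to exp(f(z)) and exp(f(z)+g(z)) with respect to Lebesgue measure. Then the total variation distance satisfies TV(P_1, P_2) = (1/2)∫_Z |exp(f(z))/N_1 − exp(f(z)+g(z))/N_2| dz ≤ (exp(2B_g) − 1)/2, where N_1 = ∫_Z exp(f(z)) dz and N_2 = ∫_Z exp(f(z)+g(z)) dz. -/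

import Mathlib

open MeasureTheory

/-- Stability of exponentially tilted (Gibbs) distributions: the total variation distance
between the Gibbs measures with densities proportional to `exp f` and `exp (f + g)` is at
most `(exp (2 B_g) − 1)/2`. -/
theorem gibbs_tv_stability
    (d : ℕ) (Z : Set (Fin d → ℝ)) (hZc : IsCompact Z) (hZv : 0 < volume Z)
    (f g : (Fin d → ℝ) → ℝ) (hf : Measurable f) (hg : Measurable g)
    (Bf Bg : ℝ) (hfb : ∀ z ∈ Z, |f z| ≤ Bf) (hgb : ∀ z ∈ Z, |g z| ≤ Bg) :
    (1 / 2) * ∫ z in Z,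
        |Real.exp (f z) / (∫ z' in Z, Real.exp (f z')) -
          Real.exp (f z + g z) / (∫ z' in Z, Real.exp (f z' + g z'))| ≤
      (Real.exp (2 * Bg) - 1) / 2 := by
  obtain ⟨z₀, hz₀⟩ : Z.Nonempty := by
    by_contra h
    rw [Set.not_nonempty_iff_eq_empty] at h
    simp [h] at hZv
  have hBg0 : 0 ≤ Bg := le_trans (abs_nonneg _) (hgb z₀ hz₀)
  have hZm : MeasurableSet Z := hZc.measurableSet
  have hvfin : volume Z ≠ ⊤ := hZc.measure_lt_top.ne
  have hvpos : 0 < (volume Z).toReal := ENNReal.toReal_pos hZv.ne' hvfin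
  set N1 : ℝ := ∫ z' in Z, Real.exp (f z') with hN1def
  set N2 : ℝ := ∫ z' in Z, Real.exp (f z' + g z') with hN2def
  have hint1 : IntegrableOn (fun z => Real.exp (f z)) Z volume := by
    apply Measure.integrableOn_of_bounded hvfin hf.exp.aestronglyMeasurable (M := Real.exp Bf)
    filter_upwards [ae_restrict_mem hZm] with z hz
    rw [Real.norm_eq_abs, abs_of_pos (Real.exp_pos _)]
    exact Real.exp_le_exp.2 (le_trans (le_abs_self _) (hfb z hz))
  have hint2 : IntegrableOn (fun z => Real.exp (f z + g z)) Z volume := by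
    apply Measure.integrableOn_of_bounded hvfin (hf.add hg).exp.aestronglyMeasurable
      (M := Real.exp (Bf + Bg))
    filter_upwards [ae_restrict_mem hZm] with z hz
    rw [Real.norm_eq_abs, abs_of_pos (Real.exp_pos _)]
    refine Real.exp_le_exp.2 (add_le_add ?_ ?_)
    · exact le_trans (le_abs_self _) (hfb z hz)
    · exact le_trans (le_abs_self _) (hgb z hz)
  have hN1pos : 0 < N1 := by
    have h := setIntegral_ge_of_const_le (c := Real.exp (-Bf)) hZm hvfin
      (fun x hx => Real.exp_le_exp.2 (neg_le_of_abs_le (hfb x hx))) hint1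
    calc (0:ℝ) < Real.exp (-Bf) * (volume Z).toReal := by positivity
    _ ≤ N1 := by rw [smul_eq_mul, mul_comm] at h; exact h
  have hN2pos : 0 < N2 := by
    have h := setIntegral_ge_of_const_le (c := Real.exp (-(Bf + Bg))) hZm hvfin
      (fun x hx => Real.exp_le_exp.2 (by
        have h1 := neg_le_of_abs_le (hfb x hx)
        have h2 := neg_le_of_abs_le (hgb x hx)
        linarith)) hint2
    calc (0:ℝ) < Real.exp (-(Bf + Bg)) * (volume Z).toReal := by positivity
    _ ≤ N2 := by rw [smul_eq_mul, mul_comm] at h; exact h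
  -- comparison of normalizing constants
  have hN2le : N2 ≤ Real.exp Bg * N1 := by
    have h : N2 ≤ ∫ z in Z, Real.exp Bg * Real.exp (f z) := by
      refine setIntegral_mono_on hint2 (hint1.const_mul _) hZm fun z hz => ?_
      rw [Real.exp_add, mul_comm]
      exact mul_le_mul_of_nonneg_right
        (Real.exp_le_exp.2 (le_trans (le_abs_self _) (hgb z hz))) (Real.exp_pos _).le
    rwa [integral_const_mul _ _] at h
  have hN2ge : Real.exp (-Bg) * N1 ≤ N2 := by
    have h : (∫ z in Z, Real.exp (-Bg) * Real.exp (f z)) ≤ N2 := by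
      refine setIntegral_mono_on (hint1.const_mul _) hint2 hZm fun z hz => ?_
      rw [Real.exp_add, mul_comm]
      exact mul_le_mul_of_nonneg_left
        (Real.exp_le_exp.2 (neg_le_of_abs_le (hgb z hz))) (Real.exp_pos _).le
    rwa [integral_const_mul _ _] at h
  have hexp2 : Real.exp (2 * Bg) = Real.exp Bg * Real.exp Bg := by
    rw [← Real.exp_add]; ring_nf
  have hprod : Real.exp (-(2 * Bg)) * Real.exp (2 * Bg) = 1 := by
    rw [← Real.exp_add]; simp
  have hN1le : N1 ≤ Real.exp Bg * N2 := by
    have h := mul_le_mul_of_nonneg_left hN2ge (Real.exp_pos Bg).le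
    rw [← mul_assoc, ← Real.exp_add] at h
    simpa using h
  -- pointwise bound
  have hpt : ∀ z ∈ Z,
      |Real.exp (f z) / N1 - Real.exp (f z + g z) / N2| ≤
        (Real.exp (2 * Bg) - 1) * (Real.exp (f z) / N1) := by
    intro z hz
    have hg1 : Real.exp (g z) ≤ Real.exp Bg :=
      Real.exp_le_exp.2 (le_trans (le_abs_self _) (hgb z hz))
    have hg2 : Real.exp (-Bg) ≤ Real.exp (g z) :=
      Real.exp_le_exp.2 (neg_le_of_abs_le (hgb z hz))
    have hA : Real.exp (g z) * N1 ≤ Real.exp (2 * Bg) * N2 := by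
      calc Real.exp (g z) * N1 ≤ Real.exp Bg * (Real.exp Bg * N2) :=
            mul_le_mul hg1 hN1le (by positivity) (Real.exp_pos _).le
      _ = Real.exp (2 * Bg) * N2 := by rw [hexp2]; ring
    have hB : Real.exp (-(2 * Bg)) * N2 ≤ Real.exp (g z) * N1 := by
      have harg : (-(2 * Bg) + Bg) = -Bg := by ring
      calc Real.exp (-(2 * Bg)) * N2
          ≤ Real.exp (-(2 * Bg)) * (Real.exp Bg * N1) :=
            mul_le_mul_of_nonneg_left hN2le (Real.exp_pos _).le
      _ = Real.exp (-Bg) * N1 := by rw [← mul_assoc, ← Real.exp_add, harg]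
      _ ≤ Real.exp (g z) * N1 := mul_le_mul_of_nonneg_right hg2 hN1pos.le
    have hub : Real.exp (g z) / N2 ≤ Real.exp (2 * Bg) / N1 :=
      (div_le_div_iff₀ hN2pos hN1pos).2 (by linarith)
    have hlb : Real.exp (-(2 * Bg)) / N1 ≤ Real.exp (g z) / N2 :=
      (div_le_div_iff₀ hN1pos hN2pos).2 (by linarith)
    have hkey : 1 - Real.exp (-(2 * Bg)) ≤ Real.exp (2 * Bg) - 1 := by
      nlinarith [sq_nonneg (Real.exp (2 * Bg) - 1), Real.exp_pos (-(2 * Bg))]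
    have hdiv1 : (Real.exp (2 * Bg) - 1) / N1 = Real.exp (2 * Bg) / N1 - 1 / N1 := sub_div _ _ _
    have hdiv2 : (1 - Real.exp (-(2 * Bg))) / N1 = 1 / N1 - Real.exp (-(2 * Bg)) / N1 :=
      sub_div _ _ _
    have hdiv3 : (1 - Real.exp (-(2 * Bg))) / N1 ≤ (Real.exp (2 * Bg) - 1) / N1 := by
      gcongr
    have hinner : |1 / N1 - Real.exp (g z) / N2| ≤ (Real.exp (2 * Bg) - 1) / N1 :=
      abs_le.2 ⟨by linarith, by linarith⟩
    have hfactor : Real.exp (f z) / N1 - Real.exp (f z + g z) / N2 =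
        Real.exp (f z) * (1 / N1 - Real.exp (g z) / N2) := by
      rw [Real.exp_add]; ring
    rw [hfactor, abs_mul, abs_of_pos (Real.exp_pos _)]
    calc Real.exp (f z) * |1 / N1 - Real.exp (g z) / N2|
        ≤ Real.exp (f z) * ((Real.exp (2 * Bg) - 1) / N1) :=
          mul_le_mul_of_nonneg_left hinner (Real.exp_pos _).le
    _ = (Real.exp (2 * Bg) - 1) * (Real.exp (f z) / N1) := by ring
  have hmain : (∫ z in Z, |Real.exp (f z) / N1 - Real.exp (f z + g z) / N2|) ≤
      ∫ z in Z, (Real.exp (2 * Bg) - 1) * (Real.exp (f z) / N1) :=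
    setIntegral_mono_on (((hint1.div_const N1).sub (hint2.div_const N2)).abs)
      ((hint1.div_const N1).const_mul _) hZm hpt
  have hval : (∫ z in Z, (Real.exp (2 * Bg) - 1) * (Real.exp (f z) / N1)) =
      Real.exp (2 * Bg) - 1 := by
    rw [integral_const_mul _ _, integral_div, div_self hN1pos.ne', mul_one]
  linarith
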